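/- Let α, β be real numbers, let Φ_{α,β}(x) = ∫_Ω e^{−Tr z} (det z)^{α} (det(xᵀ z x))^{β} dz ∈ [0,∞], and let 𝕀_d ∈ M_{n,d}(ℝ) be the matrix whose top d×d block is the identity and whose remaining rows are zero. Then for every x ∈ M_{n,d}(ℝ) of rank d, Φ_{α,β}(x) = det(xᵀx)^{β} · Φ_{α,β}(𝕀_d), as an equality in [0,∞]. -/

import Mathlib

open Matrix Complex MeasureTheory

/-! ## The space `V = Sym_n(ℝ)` of real symmetric matrices, with the Euclidean
measure induced by the inner product `⟪z, w⟫ = Tr (z w)`. -/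

/-- The submodule of symmetric `n × n` real matrices. -/
def SymSet (n : ℕ) : Submodule ℝ (Matrix (Fin n) (Fin n) ℝ) where
  carrier := {A | A.IsSymm}
  add_mem' := fun ha hb => ha.add hb
  zero_mem' := Matrix.isSymm_zero
  smul_mem' := fun c _ h => h.smul c

/-- The space `V` of symmetric `n × n` real matrices. -/
def SymMat (n : ℕ) := {A : Matrix (Fin n) (Fin n) ℝ // A.IsSymm}

namespace SymMat

variable {n : ℕ}

/-- The underlying matrix of an element of `SymMat n`. -/
def mat (z : SymMat n) : Matrix (Fin n) (Fin n) ℝ := z.1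

lemma isSymm (z : SymMat n) : z.mat.IsSymm := z.2

instance : AddCommGroup (SymMat n) := inferInstanceAs (AddCommGroup ↥(SymSet n))
noncomputable instance : Module ℝ (SymMat n) := inferInstanceAs (Module ℝ ↥(SymSet n))
instance : FiniteDimensional ℝ (SymMat n) :=
  inferInstanceAs (FiniteDimensional ℝ ↥(SymSet n))

lemma mat_add (z w : SymMat n) : (z + w).mat = z.mat + w.mat := rfl
lemma mat_smul (c : ℝ) (z : SymMat n) : (c • z).mat = c • z.mat := rfl

/-- The inner product `⟪z, w⟫ = Tr (z w)` on `SymMat n`. -/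
noncomputable def core (n : ℕ) : InnerProductSpace.Core ℝ (SymMat n) where
  inner z w := (z.mat * w.mat).trace
  conj_inner_symm := by
    intro x y
    simpa using (Matrix.trace_mul_comm y.mat x.mat)
  re_inner_nonneg := by
    intro x
    have key : 0 ≤ (x.mat * x.mat).trace := by
      rw [Matrix.trace]
      apply Finset.sum_nonneg
      intro i _
      rw [Matrix.diag_apply, Matrix.mul_apply]
      apply Finset.sum_nonneg
      intro j _
      rw [x.isSymm.apply i j]
      exact mul_self_nonneg _
    simpa using key
  definite := by
    intro x hx
    have hz := x.isSymm
    have expand : (x.mat * x.mat).trace = ∑ i, ∑ j, x.mat i j * x.mat i j := by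
      rw [Matrix.trace]
      refine Finset.sum_congr rfl fun i _ => ?_
      rw [Matrix.diag_apply, Matrix.mul_apply]
      exact Finset.sum_congr rfl fun j _ => by rw [hz.apply i j]
    have h0 : ∑ i, ∑ j, x.mat i j * x.mat i j = 0 := by rw [← expand]; exact hx
    have hmat : x.mat = 0 := by
      ext i j
      have h1 := (Finset.sum_eq_zero_iff_of_nonneg (fun i _ =>
        Finset.sum_nonneg fun j _ => mul_self_nonneg _)).mp h0 i (Finset.mem_univ i)
      have h2 := (Finset.sum_eq_zero_iff_of_nonneg (fun j _ => mul_self_nonneg _)).mp h1 j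
        (Finset.mem_univ j)
      simpa using mul_self_eq_zero.mp h2
    exact Subtype.ext hmat
  add_left := by
    intro x y z
    simp only [mat_add, Matrix.add_mul, Matrix.trace_add]
  smul_left := by
    intro x y r
    simp only [mat_smul, Matrix.smul_mul, Matrix.trace_smul, smul_eq_mul]
    simp

noncomputable instance : NormedAddCommGroup (SymMat n) := (core n).toNormedAddCommGroup
noncomputable instance : InnerProductSpace ℝ (SymMat n) := InnerProductSpace.ofCore (core n).toCore
noncomputable instance : MeasurableSpace (SymMat n) := borel _
instance : BorelSpace (SymMat n) := ⟨rfl⟩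

end SymMat

/-- The open cone `Ω ⊂ V` of positive definite symmetric matrices. -/
def Omega (n : ℕ) : Set (SymMat n) := {z | z.mat.PosDef}

/-- `Φ_{α,β}(x) = ∫_Ω e^{-Tr z} (det z)^α (det (xᵀ z x))^β dz`, an integral of a
nonnegative function with value in `[0,∞]`. -/
noncomputable def Phi (n d : ℕ) (α β : ℝ) (x : Matrix (Fin n) (Fin d) ℝ) : ENNReal :=
  ∫⁻ z in Omega n,
    ENNReal.ofReal
      (Real.exp (-(z.mat.trace)) * z.mat.det ^ α * ((xᵀ * z.mat * x).det) ^ β)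

/-- The matrix `𝕀_d ∈ M_{n,d}(ℝ)` whose top `d × d` block is the identity and whose
remaining rows are zero. -/
def IdBlock (n d : ℕ) : Matrix (Fin n) (Fin d) ℝ :=
  Matrix.of fun i j => if (i : ℕ) = (j : ℕ) then 1 else 0
section Aux
open Matrix

variable {n d : ℕ}

lemma real_star_vec (v : Fin n → ℝ) : star v = v := by funext i; simp

lemma posDef_conj {M : Matrix (Fin n) (Fin n) ℝ} (hM : M.PosDef)
    (B : Matrix (Fin n) (Fin d) ℝ) (hB : ∀ v : Fin d → ℝ, v ≠ 0 → B *ᵥ v ≠ 0) :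
    (Bᵀ * M * B).PosDef := by
  refine Matrix.PosDef.of_dotProduct_mulVec_pos ?_ ?_
  · have hMt : Mᵀ = M := by
      have h := hM.isHermitian
      rwa [Matrix.IsHermitian, conjTranspose_eq_transpose_of_trivial] at h
    rw [Matrix.IsHermitian, conjTranspose_eq_transpose_of_trivial]
    calc (Bᵀ * M * B)ᵀ = Bᵀ * Mᵀ * B := by
          rw [Matrix.transpose_mul, Matrix.transpose_mul, transpose_transpose, ← Matrix.mul_assoc]
      _ = Bᵀ * M * B := by rw [hMt]
  · intro v hv
    have key : star v ⬝ᵥ (Bᵀ * M * B) *ᵥ v = star (B *ᵥ v) ⬝ᵥ M *ᵥ (B *ᵥ v) := by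
      rw [real_star_vec, real_star_vec, ← Matrix.mulVec_mulVec, ← Matrix.mulVec_mulVec,
        Matrix.dotProduct_mulVec, Matrix.vecMul_transpose]
    rw [key]
    exact hM.dotProduct_mulVec_pos (hB v hv)

lemma mulVec_ne_zero_of_rank {x : Matrix (Fin n) (Fin d) ℝ} (hx : x.rank = d) :
    ∀ v : Fin d → ℝ, v ≠ 0 → x *ᵥ v ≠ 0 := by
  have hker : LinearMap.ker x.mulVecLin = ⊥ := by
    have h2 := x.mulVecLin.finrank_range_add_finrank_ker
    rw [Matrix.rank] at hx
    rw [hx, Module.finrank_fin_fun] at h2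
    have : Module.finrank ℝ (LinearMap.ker x.mulVecLin) = 0 := by omega
    exact Submodule.finrank_eq_zero.mp this
  intro v hv h0
  apply hv
  have : v ∈ LinearMap.ker x.mulVecLin := by
    simpa [Matrix.mulVecLin_apply] using h0
  rwa [hker, Submodule.mem_bot] at this

lemma transpose_mul_self_posDef {x : Matrix (Fin n) (Fin d) ℝ} (hx : x.rank = d) :
    (xᵀ * x).PosDef := by
  have h := posDef_conj (Matrix.PosDef.one (n := Fin n)) x (mulVec_ne_zero_of_rank hx)
  rwa [Matrix.mul_one] at h

end Aux
section Aux2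
open Matrix

variable {n d : ℕ}

lemma IdBlock_apply (i : Fin n) (j : Fin d) :
    IdBlock n d i j = if (i : ℕ) = (j : ℕ) then 1 else 0 := rfl

lemma mul_IdBlock_apply (hdn : d ≤ n) (A : Matrix (Fin n) (Fin n) ℝ) (i : Fin n) (j : Fin d) :
    (A * IdBlock n d) i j = A i (Fin.castLE hdn j) := by
  rw [Matrix.mul_apply]
  rw [Finset.sum_eq_single (Fin.castLE hdn j)]
  · simp [IdBlock_apply]
  · intro k _ hk
    have hne : ¬ ((k : ℕ) = (j : ℕ)) := by
      intro h
      exact hk (by apply Fin.ext; simpa using h)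
    simp [IdBlock_apply, hne]
  · simp

lemma IdBlock_mulVec (hdn : d ≤ n) (u : Fin d → ℝ) (j : Fin d) :
    ((IdBlock n d) *ᵥ u) (Fin.castLE hdn j) = u j := by
  rw [Matrix.mulVec, dotProduct]
  rw [Finset.sum_eq_single j]
  · simp [IdBlock_apply]
  · intro k _ hk
    have hne : ¬ ((j : ℕ) = (k : ℕ)) := by
      intro h
      exact hk (Fin.ext h.symm)
    simp [IdBlock_apply, hne]
  · simp

lemma IdBlock_mulVec_ne_zero (hdn : d ≤ n) :
    ∀ v : Fin d → ℝ, v ≠ 0 → (IdBlock n d) *ᵥ v ≠ 0 := by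
  intro v hv h0
  apply hv
  funext j
  have := congrFun h0 (Fin.castLE hdn j)
  rwa [IdBlock_mulVec hdn] at this

end Aux2
section Aux3
open Matrix Set

variable {n : ℕ}

/-- Evaluation of the quadratic form at `v`, as a linear map on `SymMat n`. -/
noncomputable def quadL (n : ℕ) (v : Fin n → ℝ) : SymMat n →ₗ[ℝ] ℝ where
  toFun z := v ⬝ᵥ z.mat *ᵥ v
  map_add' z w := by
    show v ⬝ᵥ (z + w).mat *ᵥ v = v ⬝ᵥ z.mat *ᵥ v + v ⬝ᵥ w.mat *ᵥ v
    rw [SymMat.mat_add, Matrix.add_mulVec, dotProduct_add]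
  map_smul' c z := by
    show v ⬝ᵥ (c • z).mat *ᵥ v = c • (v ⬝ᵥ z.mat *ᵥ v)
    rw [SymMat.mat_smul, Matrix.smul_mulVec, dotProduct_smul]

lemma quadL_apply (v : Fin n → ℝ) (z : SymMat n) : quadL n v z = v ⬝ᵥ z.mat *ᵥ v := rfl

lemma dotProduct_self_pos' {v : Fin n → ℝ} (hv : v ≠ 0) : 0 < v ⬝ᵥ v := by
  obtain ⟨i, hi⟩ := Function.ne_iff.mp hv
  rw [dotProduct]
  refine Finset.sum_pos' (fun j _ => mul_self_nonneg _) ⟨i, Finset.mem_univ i, ?_⟩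
  exact mul_self_pos.mpr hi

lemma continuous_quad (M : Matrix (Fin n) (Fin n) ℝ) :
    Continuous fun v : Fin n → ℝ => v ⬝ᵥ M *ᵥ v := by
  show Continuous fun v : Fin n → ℝ => ∑ i, v i * ∑ j, M i j * v j
  refine continuous_finset_sum _ fun i _ => (continuous_apply i).mul ?_
  exact continuous_finset_sum _ fun j _ => continuous_const.mul (continuous_apply j)

lemma measurableSet_Omega (hn : 0 < n) : MeasurableSet (Omega n) := by
  have key : Omega n = ⋃ (q : ℚ), ⋃ (_ : 0 < q),
      ⋂ v : Fin n → ℝ, (quadL n v) ⁻¹' (Ici ((q : ℝ) * (v ⬝ᵥ v))) := by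
    ext z
    constructor
    · intro hz
      have hφ : Continuous fun v : Fin n → ℝ => v ⬝ᵥ z.mat *ᵥ v := continuous_quad _
      set K : Set (Fin n → ℝ) := {v | v ⬝ᵥ v = 1} with hK
      have hKc : IsClosed K := isClosed_eq (continuous_quad 1 |>.congr ?_) continuous_const
      case refine_1 =>
        intro v
        simp [Matrix.one_mulVec]
      have hKb : K ⊆ Metric.closedBall 0 1 := by
        intro v hv
        rw [Metric.mem_closedBall, dist_zero_right]
        refine (pi_norm_le_iff_of_nonneg zero_le_one).mpr fun i => ?_
        rw [Real.norm_eq_abs, abs_le_one_iff_mul_self_le_one]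
        have h1 : v i * v i ≤ v ⬝ᵥ v := by
          rw [dotProduct]
          exact Finset.single_le_sum (fun j _ => mul_self_nonneg (v j)) (Finset.mem_univ i)
        have := hv
        rw [hK, Set.mem_setOf_eq] at this
        linarith
      have hKcompact : IsCompact K :=
        (isCompact_closedBall (0 : Fin n → ℝ) 1).of_isClosed_subset hKc hKb
      have hKne : K.Nonempty := by
        refine ⟨Pi.single (⟨0, hn⟩ : Fin n) 1, ?_⟩
        rw [hK, Set.mem_setOf_eq, dotProduct]
        rw [Finset.sum_eq_single (⟨0, hn⟩ : Fin n)]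
        · simp
        · intro k _ hk; simp [Pi.single_apply, hk]
        · simp
      obtain ⟨v0, hv0K, hmin⟩ := hKcompact.exists_isMinOn hKne hφ.continuousOn
      have hv0ne : v0 ≠ 0 := by
        intro h
        have := hv0K
        rw [hK, Set.mem_setOf_eq, h] at this
        simp at this
      have hm : 0 < v0 ⬝ᵥ z.mat *ᵥ v0 := by
        have := hz.dotProduct_mulVec_pos hv0ne
        rwa [real_star_vec] at this
      obtain ⟨q, hq0, hqm⟩ := exists_rat_btwn hm
      refine Set.mem_iUnion.mpr ⟨q, Set.mem_iUnion.mpr ⟨by exact_mod_cast hq0, ?_⟩⟩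
      refine Set.mem_iInter.mpr fun v => ?_
      rw [Set.mem_preimage, quadL_apply, Set.mem_Ici]
      by_cases hv : v = 0
      · simp [hv]
      · have hvv : 0 < v ⬝ᵥ v := dotProduct_self_pos' hv
        set t := Real.sqrt (v ⬝ᵥ v) with htdef
        have ht : 0 < t := Real.sqrt_pos.mpr hvv
        have htt : t * t = v ⬝ᵥ v := Real.mul_self_sqrt hvv.le
        have hwK : (t⁻¹ • v) ∈ K := by
          rw [hK, Set.mem_setOf_eq, smul_dotProduct, dotProduct_smul,
            smul_eq_mul, smul_eq_mul, ← htt]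
          field_simp
        have hminw := hmin hwK
        simp only at hminw
        have hφw : (t⁻¹ • v) ⬝ᵥ z.mat *ᵥ (t⁻¹ • v) = t⁻¹ * (t⁻¹ * (v ⬝ᵥ z.mat *ᵥ v)) := by
          rw [smul_dotProduct, Matrix.mulVec_smul, dotProduct_smul,
            smul_eq_mul, smul_eq_mul]
        rw [Set.mem_setOf_eq] at hminw
        rw [hφw] at hminw
        -- hminw : v0 ⬝ᵥ z.mat *ᵥ v0 ≤ t⁻¹ * (t⁻¹ * (v ⬝ᵥ z.mat *ᵥ v))
        have hqm' : (q : ℝ) < v0 ⬝ᵥ z.mat *ᵥ v0 := hqm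
        have htne : t ≠ 0 := ht.ne'
        rw [← htt]
        have h3 : (v0 ⬝ᵥ z.mat *ᵥ v0) * (t * t) ≤ v ⬝ᵥ z.mat *ᵥ v := by
          have h4 := mul_le_mul_of_nonneg_right hminw (le_of_lt (mul_pos ht ht))
          calc (v0 ⬝ᵥ z.mat *ᵥ v0) * (t * t)
              ≤ t⁻¹ * (t⁻¹ * v ⬝ᵥ z.mat *ᵥ v) * (t * t) := h4
            _ = v ⬝ᵥ z.mat *ᵥ v := by field_simp
        nlinarith [h3, hqm', mul_pos ht ht]
    · intro hz
      obtain ⟨q, hq⟩ := Set.mem_iUnion.mp hz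
      obtain ⟨hq0, hmem⟩ := Set.mem_iUnion.mp hq
      refine Matrix.PosDef.of_dotProduct_mulVec_pos ?_ ?_
      · rw [Matrix.IsHermitian, Matrix.conjTranspose_eq_transpose_of_trivial]
        exact z.isSymm
      · intro v hv
        rw [real_star_vec]
        have h1 := Set.mem_iInter.mp hmem v
        rw [Set.mem_preimage, quadL_apply, Set.mem_Ici] at h1
        have hvv : 0 < v ⬝ᵥ v := dotProduct_self_pos' hv
        have hq0' : (0 : ℝ) < q := by exact_mod_cast hq0
        exact lt_of_lt_of_le (mul_pos hq0' hvv) h1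
  rw [key]
  refine MeasurableSet.iUnion fun q => MeasurableSet.iUnion fun _ => ?_
  have hcl : IsClosed (⋂ v : Fin n → ℝ, (quadL n v) ⁻¹' (Ici ((q : ℝ) * (v ⬝ᵥ v)))) :=
    isClosed_iInter fun v =>
      IsClosed.preimage (quadL n v).continuous_of_finiteDimensional isClosed_Ici
  exact hcl.measurableSet

end Aux3
section Aux4
open Matrix

lemma exists_orthogonal_factor {n d : ℕ} (hdn : d ≤ n)
    (s : Matrix (Fin n) (Fin d) ℝ) (hs : sᵀ * s = 1) :
    ∃ U : Matrix (Fin n) (Fin n) ℝ, Uᵀ * U = 1 ∧ U * IdBlock n d = s := by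
  classical
  set S : Set (Fin n) := {i : Fin n | (i : ℕ) < d} with hS
  let v : Fin n → EuclideanSpace ℝ (Fin n) := fun i =>
    if h : (i : ℕ) < d then WithLp.toLp 2 (fun r => s r ⟨(i : ℕ), h⟩) else 0
  have hon : Orthonormal ℝ (S.restrict v) := by
    rw [orthonormal_iff_ite]
    intro i j
    have hi : ((i : Fin n) : ℕ) < d := i.2
    have hj : ((j : Fin n) : ℕ) < d := j.2
    have hvi : S.restrict v i = fun r => s r ⟨((i : Fin n) : ℕ), hi⟩ := by
      show (v (i : Fin n)).ofLp = _
      simp only [Set.restrict_apply, v, dif_pos hi, WithLp.ofLp_toLp]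
    have hvj : S.restrict v j = fun r => s r ⟨((j : Fin n) : ℕ), hj⟩ := by
      show (v (j : Fin n)).ofLp = _
      simp only [Set.restrict_apply, v, dif_pos hj, WithLp.ofLp_toLp]
    rw [PiLp.inner_apply, hvi, hvj]
    have h2 : (sᵀ * s) (⟨((i : Fin n) : ℕ), hi⟩ : Fin d) ⟨((j : Fin n) : ℕ), hj⟩
        = if i = j then 1 else 0 := by
      rw [hs, Matrix.one_apply]
      have hiff : ((⟨((i : Fin n) : ℕ), hi⟩ : Fin d) = ⟨((j : Fin n) : ℕ), hj⟩) ↔ i = j := by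
        rw [Fin.mk.injEq]
        constructor
        · intro h; exact Subtype.ext (Fin.ext h)
        · intro h; rw [h]
      simp [hiff]
    rw [← h2, Matrix.mul_apply]
    refine Finset.sum_congr rfl fun r _ => ?_
    simp [Matrix.transpose_apply, mul_comm]
  obtain ⟨b, hb⟩ := hon.exists_orthonormalBasis_extension_of_card_eq
    (finrank_euclideanSpace (𝕜 := ℝ) (ι := Fin n))
  refine ⟨Matrix.of fun r k => b k r, ?_, ?_⟩
  · ext k l
    rw [Matrix.mul_apply, Matrix.one_apply]
    have := (orthonormal_iff_ite.mp b.orthonormal) k l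
    rw [PiLp.inner_apply] at this
    calc ∑ r, (Matrix.of fun r k => b k r)ᵀ k r * (Matrix.of fun r k => b k r) r l
        = ∑ r, (starRingEnd ℝ) (b k r) * b l r := by
          refine Finset.sum_congr rfl fun r _ => ?_
          simp [Matrix.transpose_apply]
      _ = if k = l then 1 else 0 := by simpa [mul_comm] using this
  · ext r j
    rw [mul_IdBlock_apply hdn]
    have hmem : (Fin.castLE hdn j : Fin n) ∈ S := by
      rw [hS]; simpa using j.2
    have := hb _ hmem
    have hcast : ((Fin.castLE hdn j : Fin n) : ℕ) < d := by simpa using j.2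
    calc (Matrix.of fun r k => b k r) r (Fin.castLE hdn j)
        = b (Fin.castLE hdn j) r := rfl
      _ = v (Fin.castLE hdn j) r := by rw [this]
      _ = s r j := by
          simp only [v, dif_pos hcast, WithLp.ofLp_toLp]
          exact congrArg (s r) (Fin.ext (by simp))

end Aux4
section Aux5
open Matrix

lemma isSymm_conj {n m : ℕ} {M : Matrix (Fin n) (Fin n) ℝ} (hM : M.IsSymm)
    (A : Matrix (Fin n) (Fin m) ℝ) : (Aᵀ * M * A).IsSymm := by
  show (Aᵀ * M * A)ᵀ = Aᵀ * M * A
  calc (Aᵀ * M * A)ᵀ = Aᵀ * Mᵀ * A := by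
        rw [Matrix.transpose_mul, Matrix.transpose_mul, Matrix.transpose_transpose,
          ← Matrix.mul_assoc]
    _ = Aᵀ * M * A := by rw [hM]

lemma symMat_inner_eq {n : ℕ} (z w : SymMat n) :
    inner ℝ z w = (z.mat * w.mat).trace := rfl

/-- Conjugation by an orthogonal matrix, as a linear isometry of `SymMat n`. -/
noncomputable def conjE {n : ℕ} (U : Matrix (Fin n) (Fin n) ℝ)
    (hUtU : Uᵀ * U = 1) (hUUt : U * Uᵀ = 1) : SymMat n ≃ₗᵢ[ℝ] SymMat n :=
  LinearEquiv.isometryOfInner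
    { toFun := fun z => ⟨Uᵀ * z.mat * U, isSymm_conj z.isSymm U⟩
      invFun := fun z => ⟨U * z.mat * Uᵀ, by
        have h := isSymm_conj z.isSymm Uᵀ
        rwa [Matrix.transpose_transpose] at h⟩
      map_add' := fun z w => Subtype.ext (by
        show Uᵀ * (z + w).mat * U = Uᵀ * z.mat * U + Uᵀ * w.mat * U
        rw [SymMat.mat_add, Matrix.mul_add, Matrix.add_mul])
      map_smul' := fun c z => Subtype.ext (by
        show Uᵀ * (c • z).mat * U = c • (Uᵀ * z.mat * U)
        rw [SymMat.mat_smul, Matrix.mul_smul, Matrix.smul_mul])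
      left_inv := fun z => Subtype.ext (by
        show U * (Uᵀ * z.mat * U) * Uᵀ = z.mat
        simp only [← Matrix.mul_assoc]
        rw [hUUt, Matrix.one_mul, Matrix.mul_assoc, hUUt, Matrix.mul_one])
      right_inv := fun z => Subtype.ext (by
        show Uᵀ * (U * z.mat * Uᵀ) * U = z.mat
        simp only [← Matrix.mul_assoc]
        rw [hUtU, Matrix.one_mul, Matrix.mul_assoc, hUtU, Matrix.mul_one]) }
    (by
      intro z w
      rw [symMat_inner_eq, symMat_inner_eq]
      show ((Uᵀ * z.mat * U) * (Uᵀ * w.mat * U)).trace = (z.mat * w.mat).trace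
      have h1 : (Uᵀ * z.mat * U) * (Uᵀ * w.mat * U) = Uᵀ * (z.mat * (w.mat * U)) := by
        simp only [Matrix.mul_assoc]
        rw [← Matrix.mul_assoc U Uᵀ, hUUt, Matrix.one_mul]
      rw [h1, Matrix.trace_mul_comm]
      simp only [Matrix.mul_assoc]
      rw [hUUt, Matrix.mul_one])

lemma conjE_apply_mat {n : ℕ} (U : Matrix (Fin n) (Fin n) ℝ)
    (hUtU : Uᵀ * U = 1) (hUUt : U * Uᵀ = 1) (z : SymMat n) :
    (conjE U hUtU hUUt z).mat = Uᵀ * z.mat * U := rfl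

end Aux5
open scoped MatrixOrder
/-- for every `x ∈ M_{n,d}(ℝ)` of rank `d`,
`Φ_{α,β}(x) = det(xᵀx)^β · Φ_{α,β}(𝕀_d)`, as an equality in `[0,∞]`. -/
theorem Phi_eq_det_pow_mul_Phi_IdBlock (n d : ℕ) (hd : 1 ≤ d) (hdn : d ≤ n) (α β : ℝ)
    (x : Matrix (Fin n) (Fin d) ℝ) (hx : x.rank = d) :
    Phi n d α β x = ENNReal.ofReal (((xᵀ * x).det) ^ β) * Phi n d α β (IdBlock n d) := by
  classical
  have hn : 0 < n := lt_of_lt_of_le hd hdn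
  have hxx : (xᵀ * x).PosDef := transpose_mul_self_posDef hx
  set p := CFC.sqrt (xᵀ * x) with hp
  have hpsymm : pᵀ = p := by
    have h2 : pᴴ = p := (CFC.sqrt_nonneg (xᵀ * x)).posSemidef.isHermitian
    rwa [Matrix.conjTranspose_eq_transpose_of_trivial] at h2
  have hpp : p * p = xᵀ * x := CFC.sqrt_mul_sqrt_self (xᵀ * x) hxx.posSemidef.nonneg
  have hdetxx : 0 < (xᵀ * x).det := hxx.det_pos
  have hdetp : IsUnit p.det := by
    refine isUnit_iff_ne_zero.mpr fun h0 => ?_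
    have h1 : p.det * p.det = (xᵀ * x).det := by rw [← Matrix.det_mul, hpp]
    rw [h0, mul_zero] at h1
    rw [← h1] at hdetxx
    exact lt_irrefl 0 hdetxx
  set s := x * p⁻¹ with hsdef
  have hpinvt : p⁻¹ᵀ = p⁻¹ := by rw [Matrix.transpose_nonsing_inv, hpsymm]
  have hsts : sᵀ * s = 1 := by
    calc sᵀ * s = p⁻¹ * (xᵀ * x) * p⁻¹ := by
          rw [hsdef, Matrix.transpose_mul, hpinvt]
          simp only [Matrix.mul_assoc]
      _ = p⁻¹ * p * (p * p⁻¹) := by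
          rw [← hpp]
          simp only [Matrix.mul_assoc]
      _ = 1 := by
          rw [Matrix.nonsing_inv_mul _ hdetp, Matrix.mul_nonsing_inv _ hdetp, Matrix.one_mul]
  obtain ⟨U, hUtU, hUId⟩ := exists_orthogonal_factor hdn s hsts
  have hUUt : U * Uᵀ = 1 := mul_eq_one_comm.mp hUtU
  have hxUp : x = U * IdBlock n d * p := by
    rw [hUId, hsdef]
    exact (Matrix.nonsing_inv_mul_cancel_right _ _ hdetp).symm
  have hUinj : ∀ v : Fin n → ℝ, v ≠ 0 → U *ᵥ v ≠ 0 := by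
    intro v hv h0
    apply hv
    calc v = (Uᵀ * U) *ᵥ v := by rw [hUtU, Matrix.one_mulVec]
      _ = Uᵀ *ᵥ (U *ᵥ v) := by rw [← Matrix.mulVec_mulVec]
      _ = 0 := by rw [h0, Matrix.mulVec_zero]
  have hUtinj : ∀ v : Fin n → ℝ, v ≠ 0 → Uᵀ *ᵥ v ≠ 0 := by
    intro v hv h0
    apply hv
    calc v = (U * Uᵀ) *ᵥ v := by rw [hUUt, Matrix.one_mulVec]
      _ = U *ᵥ (Uᵀ *ᵥ v) := by rw [← Matrix.mulVec_mulVec]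
      _ = 0 := by rw [h0, Matrix.mulVec_zero]
  set e := conjE U hUtU hUUt with hedef
  have hemat : ∀ z : SymMat n, (e z).mat = Uᵀ * z.mat * U := fun z => rfl
  have hdetU : U.det * U.det = 1 := by
    have := congrArg Matrix.det hUtU
    rwa [Matrix.det_mul, Matrix.det_transpose, Matrix.det_one] at this
  have htrE : ∀ z : SymMat n, (Uᵀ * z.mat * U).trace = z.mat.trace := by
    intro z
    rw [Matrix.trace_mul_cycle, hUUt, Matrix.one_mul]
  have hdetE : ∀ z : SymMat n, (Uᵀ * z.mat * U).det = z.mat.det := by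
    intro z
    rw [Matrix.det_mul, Matrix.det_mul, Matrix.det_transpose]
    calc U.det * z.mat.det * U.det = z.mat.det * (U.det * U.det) := by ring
      _ = z.mat.det := by rw [hdetU, mul_one]
  have hpre : e ⁻¹' Omega n = Omega n := by
    ext z
    simp only [Set.mem_preimage, Omega, Set.mem_setOf_eq, hemat]
    constructor
    · intro h
      have h2 := posDef_conj h Uᵀ hUtinj
      rw [Matrix.transpose_transpose] at h2
      have h3 : U * (Uᵀ * z.mat * U) * Uᵀ = z.mat := by
        simp only [← Matrix.mul_assoc]
        rw [hUUt, Matrix.one_mul, Matrix.mul_assoc, hUUt, Matrix.mul_one]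
      rwa [h3] at h2
    · intro h
      exact posDef_conj h U hUinj
  set G : SymMat n → ENNReal := fun w =>
    ENNReal.ofReal
      (Real.exp (-(w.mat.trace)) * w.mat.det ^ α *
        (((IdBlock n d)ᵀ * w.mat * IdBlock n d).det) ^ β) with hGdef
  have hgoalfun : ∀ z ∈ Omega n,
      ENNReal.ofReal
        (Real.exp (-(z.mat.trace)) * z.mat.det ^ α * ((xᵀ * z.mat * x).det) ^ β)
      = ENNReal.ofReal (((xᵀ * x).det) ^ β) * G (e z) := by
    intro z hz
    have hzP : z.mat.PosDef := hz
    have hezP : (Uᵀ * z.mat * U).PosDef := posDef_conj hzP U hUinj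
    have hQP : ((IdBlock n d)ᵀ * (Uᵀ * z.mat * U) * IdBlock n d).PosDef :=
      posDef_conj hezP (IdBlock n d) (IdBlock_mulVec_ne_zero hdn)
    have hfac : xᵀ * z.mat * x
        = pᵀ * ((IdBlock n d)ᵀ * (Uᵀ * z.mat * U) * IdBlock n d) * p := by
      rw [hxUp]
      simp only [Matrix.transpose_mul, Matrix.transpose_transpose, Matrix.mul_assoc]
    have hdetfac : (xᵀ * z.mat * x).det
        = (xᵀ * x).det * ((IdBlock n d)ᵀ * (Uᵀ * z.mat * U) * IdBlock n d).det := by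
      rw [hfac, Matrix.det_mul, Matrix.det_mul, Matrix.det_transpose]
      rw [← hpp, Matrix.det_mul]
      ring
    have hrpow : ((xᵀ * z.mat * x).det) ^ β
        = ((xᵀ * x).det) ^ β * (((IdBlock n d)ᵀ * (Uᵀ * z.mat * U) * IdBlock n d).det) ^ β := by
      rw [hdetfac]
      exact Real.mul_rpow hdetxx.le hQP.det_pos.le
    rw [hGdef]
    simp only [hemat, htrE, hdetE]
    rw [← ENNReal.ofReal_mul (Real.rpow_nonneg hdetxx.le β)]
    congr 1
    rw [hrpow]
    ring
  rw [Phi, setLIntegral_congr_fun (measurableSet_Omega hn) hgoalfun,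
    MeasureTheory.lintegral_const_mul' _ _ ENNReal.ofReal_ne_top]
  congr 1
  have hmp : MeasureTheory.MeasurePreserving e := e.measurePreserving
  have hemb : MeasurableEmbedding e := e.toHomeomorph.measurableEmbedding
  have hkey := hmp.setLIntegral_comp_preimage_emb hemb G (Omega n)
  rw [hpre] at hkey
  exact hkey
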